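/- (Theorem 2, global optimality) Suppose σ̄ ≥ 0, G(σ̄) = Q + σ̄L₀ is positive definite, x̄ = G(σ̄)⁻¹c lies in the Lorentz cone C, and the complementarity condition σ̄ · (x̄ᵀL₀x̄) = 0 holds. Then x̄ is a global minimizer of P over C, i.e. P(x̄) ≤ P(x) for all x ∈ C, and P(x̄) = P^d(σ̄). -/

import Mathlib

open Matrix

/-- The Lorentz matrix `L₀ = diag(−1, I_{n−1})`. -/
noncomputable def L0 (n : ℕ) [NeZero n] : Matrix (Fin n) (Fin n) ℝ :=
  Matrix.diagonal (fun i => if i = 0 then (-1 : ℝ) else 1)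

/-- The Lorentz cone `C = {x : ‖x₂‖ ≤ x₁, x₁ > 0}`, with the Euclidean norm of the
tail written as the square root of the sum of squares. -/
noncomputable def lorentzCone (n : ℕ) [NeZero n] : Set (Fin n → ℝ) :=
  {x | Real.sqrt (∑ i ∈ Finset.univ \ {(0 : Fin n)}, (x i) ^ 2) ≤ x 0 ∧ 0 < x 0}

/-- The primal objective `P(x) = ½ xᵀQx − cᵀx`. -/
noncomputable def Pobj (n : ℕ) (Q : Matrix (Fin n) (Fin n) ℝ) (c : Fin n → ℝ)
    (x : Fin n → ℝ) : ℝ :=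
  (1 / 2) * (x ⬝ᵥ (Q *ᵥ x)) - c ⬝ᵥ x

/-- `G(σ) = Q + σ L₀`. -/
noncomputable def Gm (n : ℕ) [NeZero n] (Q : Matrix (Fin n) (Fin n) ℝ) (σ : ℝ) :
    Matrix (Fin n) (Fin n) ℝ :=
  Q + σ • L0 n

/-- The total complementary function `Ξ(x, σ) = ½ xᵀG(σ)x − cᵀx`. -/
noncomputable def Xi (n : ℕ) [NeZero n] (Q : Matrix (Fin n) (Fin n) ℝ) (c : Fin n → ℝ)
    (x : Fin n → ℝ) (σ : ℝ) : ℝ :=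
  (1 / 2) * (x ⬝ᵥ ((Gm n Q σ) *ᵥ x)) - c ⬝ᵥ x

/-- The canonical dual objective `P^d(σ) = −½ cᵀG(σ)⁻¹c`. -/
noncomputable def Pd (n : ℕ) [NeZero n] (Q : Matrix (Fin n) (Fin n) ℝ) (c : Fin n → ℝ)
    (σ : ℝ) : ℝ :=
  -(1 / 2) * (c ⬝ᵥ ((Gm n Q σ)⁻¹ *ᵥ c))

lemma symm_Gm {n : ℕ} [NeZero n] (Q : Matrix (Fin n) (Fin n) ℝ) (hQ : Q.IsSymm) (σ : ℝ) :
    (Gm n Q σ).IsSymm := by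
  unfold Gm L0
  rw [Matrix.IsSymm, Matrix.transpose_add, hQ, Matrix.transpose_smul,
    (Matrix.isSymm_diagonal _)]

lemma quad_lorentz {n : ℕ} [NeZero n] (x : Fin n → ℝ) :
    x ⬝ᵥ (L0 n *ᵥ x) = (∑ i ∈ Finset.univ \ {(0 : Fin n)}, (x i) ^ 2) - x 0 ^ 2 := by
  classical
  have h0 : (Finset.univ : Finset (Fin n)) = insert 0 (Finset.univ \ {0}) := by
    ext i; by_cases h : i = 0 <;> simp [h]
  simp only [dotProduct, L0, mulVec_diagonal]
  rw [h0, Finset.sum_insert (by simp)]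
  have : ∀ i ∈ Finset.univ \ {(0 : Fin n)},
      x i * ((if i = 0 then (-1:ℝ) else 1) * x i) = x i ^ 2 := by
    intro i hi
    simp at hi
    rw [if_neg hi]; ring
  rw [Finset.sum_congr rfl this]
  simp; ring

lemma key_quad {n : ℕ} [NeZero n] (M : Matrix (Fin n) (Fin n) ℝ) (hM : M.IsSymm)
    (a c x : Fin n → ℝ) (hMa : M *ᵥ a = c) :
    (1/2) * (x ⬝ᵥ (M *ᵥ x)) - c ⬝ᵥ x
      = (1/2) * ((x - a) ⬝ᵥ (M *ᵥ (x - a))) - (1/2) * (c ⬝ᵥ a) := by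
  have h1 : a ⬝ᵥ (M *ᵥ x) = c ⬝ᵥ x := by
    rw [dotProduct_mulVec, ← Matrix.mulVec_transpose, hM.eq, hMa]
  have h2 : x ⬝ᵥ (M *ᵥ a) = c ⬝ᵥ x := by
    rw [hMa, dotProduct_comm]
  have h3 : a ⬝ᵥ (M *ᵥ a) = c ⬝ᵥ a := by
    rw [hMa, dotProduct_comm]
  rw [Matrix.mulVec_sub, sub_dotProduct, dotProduct_sub, dotProduct_sub, h1, h2, h3]
  ring

lemma quad_nonpos_of_mem {n : ℕ} [NeZero n] {x : Fin n → ℝ} (hx : x ∈ lorentzCone n) :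
    x ⬝ᵥ (L0 n *ᵥ x) ≤ 0 := by
  obtain ⟨h1, h2⟩ := hx
  rw [quad_lorentz]
  have hS : (0:ℝ) ≤ ∑ i ∈ Finset.univ \ {(0 : Fin n)}, (x i) ^ 2 :=
    Finset.sum_nonneg fun i _ => sq_nonneg _
  have := Real.sq_sqrt hS
  nlinarith [Real.sqrt_nonneg (∑ i ∈ Finset.univ \ {(0 : Fin n)}, (x i) ^ 2)]

lemma Pobj_eq_Xi {n : ℕ} [NeZero n] (Q : Matrix (Fin n) (Fin n) ℝ) (c : Fin n → ℝ)
    (x : Fin n → ℝ) (σ : ℝ) :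
    Pobj n Q c x = Xi n Q c x σ - (σ / 2) * (x ⬝ᵥ (L0 n *ᵥ x)) := by
  unfold Pobj Xi Gm
  rw [Matrix.add_mulVec, dotProduct_add, Matrix.smul_mulVec, dotProduct_smul,
    smul_eq_mul]
  ring

/-- Theorem 2, global optimality: if `σ̄ ≥ 0`, `G(σ̄) ≻ 0`,
`x̄ = G(σ̄)⁻¹c ∈ C` and `σ̄ · (x̄ᵀL₀x̄) = 0`, then `x̄` globally minimizes `P` over `C`
and `P(x̄) = P^d(σ̄)`. -/
theorem global_optimality {n : ℕ} [NeZero n] (hn : 2 ≤ n)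
    (Q : Matrix (Fin n) (Fin n) ℝ) (hQ : Q.IsSymm) (c : Fin n → ℝ)
    (σbar : ℝ) (hσ : 0 ≤ σbar) (hG : (Gm n Q σbar).PosDef)
    (xbar : Fin n → ℝ) (hx : xbar = (Gm n Q σbar)⁻¹ *ᵥ c)
    (hxC : xbar ∈ lorentzCone n)
    (hcomp : σbar * (xbar ⬝ᵥ ((L0 n) *ᵥ xbar)) = 0) :
    (∀ x ∈ lorentzCone n, Pobj n Q c xbar ≤ Pobj n Q c x) ∧
    Pobj n Q c xbar = Pd n Q c σbar := by
  have hdet : IsUnit (Gm n Q σbar).det := isUnit_iff_ne_zero.2 hG.det_pos.ne'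
  have hGc : Gm n Q σbar *ᵥ xbar = c := by
    rw [hx, Matrix.mulVec_mulVec, Matrix.mul_nonsing_inv _ hdet, Matrix.one_mulVec]
  have hsymm := symm_Gm Q hQ σbar
  have hXibar : Xi n Q c xbar σbar = - (1/2) * (c ⬝ᵥ xbar) := by
    unfold Xi
    rw [key_quad _ hsymm xbar c xbar hGc]
    simp
  have hPxbar : Pobj n Q c xbar = Xi n Q c xbar σbar := by
    rw [Pobj_eq_Xi Q c xbar σbar]
    have : (σbar / 2) * (xbar ⬝ᵥ (L0 n *ᵥ xbar)) = 0 := by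
      rw [div_mul_eq_mul_div, hcomp]; simp
    rw [this, sub_zero]
  constructor
  · intro x hxmem
    have hXile : Xi n Q c xbar σbar ≤ Xi n Q c x σbar := by
      unfold Xi
      rw [key_quad _ hsymm xbar c x hGc, key_quad _ hsymm xbar c xbar hGc]
      rw [sub_self, Matrix.mulVec_zero, dotProduct_zero]
      have h0 : (0:ℝ) ≤ (x - xbar) ⬝ᵥ (Gm n Q σbar *ᵥ (x - xbar)) := by
        have := hG.posSemidef.dotProduct_mulVec_nonneg (x - xbar)
        simpa using this
      linarith
    have hle2 : Xi n Q c x σbar ≤ Pobj n Q c x := by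
      rw [Pobj_eq_Xi Q c x σbar]
      have : 0 ≤ -((σbar / 2) * (x ⬝ᵥ (L0 n *ᵥ x))) := by
        have h1 := quad_nonpos_of_mem hxmem
        nlinarith
      linarith
    linarith [hPxbar ▸ (le_trans hXile hle2)]
  · rw [hPxbar, hXibar]
    unfold Pd
    rw [hx]
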